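/- Let U_C ∈ ℝ^{m×c} and V_R ∈ ℝ^{n×r} have orthonormal columns, and suppose P = U_C U_Cᵀ is left SF(ε,k) for A and Q = V_R V_Rᵀ is right SF(ε,k) for A. Then min_X ‖A − U_C X V_Rᵀ‖_F ≤ √(1+4ε) · ‖A − A_k‖_F, where the minimum is over all c×r matrices X. -/

import Mathlib

open Matrix BigOperators

/-- Frobenius norm of a real matrix. -/
noncomputable def frob {m n : ℕ} (A : Matrix (Fin m) (Fin n) ℝ) : ℝ :=
  Real.sqrt (∑ i, ∑ j, (A i j) ^ 2)

/-- Spectral (operator ℓ2→ℓ2) norm of a real matrix. -/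
noncomputable def spec {m n : ℕ} (A : Matrix (Fin m) (Fin n) ℝ) : ℝ :=
  ‖LinearMap.toContinuousLinearMap (Matrix.toEuclideanLin A)‖

/-- `B` is the Moore–Penrose pseudoinverse of `A` (four Penrose conditions). -/
def IsMPInv {m n : ℕ} (A : Matrix (Fin m) (Fin n) ℝ) (B : Matrix (Fin n) (Fin m) ℝ) : Prop :=
  A * B * A = A ∧ B * A * B = B ∧ (A * B)ᵀ = A * B ∧ (B * A)ᵀ = B * A

namespace SF16

noncomputable def nsq {m : ℕ} (v : Fin m → ℝ) : ℝ := ∑ i, (v i)^2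

noncomputable def F2 {m n : ℕ} (X : Matrix (Fin m) (Fin n) ℝ) : ℝ := ∑ i, ∑ j, (X i j)^2

noncomputable def ip {m n : ℕ} (X Y : Matrix (Fin m) (Fin n) ℝ) : ℝ :=
  ∑ i, ∑ j, X i j * Y i j

variable {a b d p m n : ℕ}

lemma nsq_nonneg (v : Fin m → ℝ) : 0 ≤ nsq v :=
  Finset.sum_nonneg fun _ _ => sq_nonneg _

lemma F2_nonneg (X : Matrix (Fin m) (Fin n) ℝ) : 0 ≤ F2 X :=
  Finset.sum_nonneg fun _ _ => Finset.sum_nonneg fun _ _ => sq_nonneg _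

lemma nsq_eq_dot (v : Fin m → ℝ) : nsq v = v ⬝ᵥ v := by
  simp [nsq, dotProduct, sq]

lemma frob_eq {X : Matrix (Fin m) (Fin n) ℝ} : frob X = Real.sqrt (F2 X) := rfl

lemma spec_nonneg (M : Matrix (Fin m) (Fin n) ℝ) : 0 ≤ spec M := norm_nonneg _

lemma dot_le_sqrt (v w : Fin m → ℝ) :
    v ⬝ᵥ w ≤ Real.sqrt (nsq v) * Real.sqrt (nsq w) := by
  simpa [dotProduct, nsq] using
    Real.sum_mul_le_sqrt_mul_sqrt Finset.univ v w

lemma norm_symm (w : Fin m → ℝ) :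
    ‖(WithLp.equiv 2 (Fin m → ℝ)).symm w‖ = Real.sqrt (nsq w) := by
  rw [EuclideanSpace.norm_eq]
  congr 1
  simp [nsq, Real.norm_eq_abs, sq_abs]

lemma sqrt_nsq_mulVec_le (M : Matrix (Fin m) (Fin n) ℝ) (v : Fin n → ℝ) :
    Real.sqrt (nsq (M *ᵥ v)) ≤ spec M * Real.sqrt (nsq v) := by
  have h := (LinearMap.toContinuousLinearMap (Matrix.toEuclideanLin M)).le_opNorm
      ((WithLp.equiv 2 (Fin n → ℝ)).symm v)
  rw [LinearMap.coe_toContinuousLinearMap'] at h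
  rw [show (WithLp.equiv 2 (Fin n → ℝ)).symm v = WithLp.toLp 2 v from rfl,
    Matrix.toEuclideanLin_apply_piLp_toLp] at h
  change ‖(WithLp.equiv 2 (Fin m → ℝ)).symm (M *ᵥ v)‖ ≤ _ * ‖(WithLp.equiv 2 (Fin n → ℝ)).symm v‖ at h
  rw [norm_symm, norm_symm] at h
  exact h

lemma nsq_mulVec_le (M : Matrix (Fin m) (Fin n) ℝ) (v : Fin n → ℝ) :
    nsq (M *ᵥ v) ≤ spec M ^ 2 * nsq v := by
  have h := sqrt_nsq_mulVec_le M v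
  have h2 : Real.sqrt (nsq (M *ᵥ v)) ^ 2 ≤ (spec M * Real.sqrt (nsq v)) ^ 2 := by
    apply pow_le_pow_left₀ (Real.sqrt_nonneg _) h
  rwa [Real.sq_sqrt (nsq_nonneg _), mul_pow, Real.sq_sqrt (nsq_nonneg _)] at h2

lemma nsq_transpose_mulVec_le (M : Matrix (Fin m) (Fin n) ℝ) (v : Fin m → ℝ) :
    nsq (Mᵀ *ᵥ v) ≤ spec M ^ 2 * nsq v := by
  have key : nsq (Mᵀ *ᵥ v) = v ⬝ᵥ (M *ᵥ (Mᵀ *ᵥ v)) := by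
    rw [nsq_eq_dot]
    conv_rhs => rw [Matrix.dotProduct_mulVec, ← Matrix.mulVec_transpose]
  have h1 : v ⬝ᵥ (M *ᵥ (Mᵀ *ᵥ v)) ≤ Real.sqrt (nsq v) * (spec M * Real.sqrt (nsq (Mᵀ *ᵥ v))) := by
    refine le_trans (dot_le_sqrt _ _) ?_
    exact mul_le_mul_of_nonneg_left (sqrt_nsq_mulVec_le M _) (Real.sqrt_nonneg _)
  have h3 : Real.sqrt (nsq (Mᵀ *ᵥ v)) ≤ Real.sqrt (nsq v) * spec M := by
    rcases eq_or_lt_of_le (Real.sqrt_nonneg (nsq (Mᵀ *ᵥ v))) with h | h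
    · rw [← h]
      exact mul_nonneg (Real.sqrt_nonneg _) (spec_nonneg M)
    · have h2 : Real.sqrt (nsq (Mᵀ *ᵥ v)) ^ 2 ≤
          Real.sqrt (nsq v) * spec M * Real.sqrt (nsq (Mᵀ *ᵥ v)) := by
        rw [Real.sq_sqrt (nsq_nonneg _)]
        calc nsq (Mᵀ *ᵥ v) = v ⬝ᵥ (M *ᵥ (Mᵀ *ᵥ v)) := key
        _ ≤ _ := by linarith [h1]
      nlinarith [h2]
  have h4 := pow_le_pow_left₀ (Real.sqrt_nonneg _) h3 2
  rw [Real.sq_sqrt (nsq_nonneg _), mul_pow, Real.sq_sqrt (nsq_nonneg _)] at h4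
  linarith [h4]

-- orthonormal columns lemmas
section orth
variable (U : Matrix (Fin m) (Fin p) ℝ)

lemma nsq_orth_mulVec (hU : Uᵀ * U = 1) (w : Fin p → ℝ) : nsq (U *ᵥ w) = nsq w := by
  rw [nsq_eq_dot, nsq_eq_dot]
  conv_lhs => rw [Matrix.dotProduct_mulVec, ← Matrix.mulVec_transpose,
    Matrix.mulVec_mulVec, hU, Matrix.one_mulVec]

lemma nsq_orthT_mulVec_le (hU : Uᵀ * U = 1) (v : Fin m → ℝ) : nsq (Uᵀ *ᵥ v) ≤ nsq v := by
  have key : nsq (Uᵀ *ᵥ v) = v ⬝ᵥ (U *ᵥ (Uᵀ *ᵥ v)) := by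
    rw [nsq_eq_dot]
    conv_rhs => rw [Matrix.dotProduct_mulVec, ← Matrix.mulVec_transpose]
  have hn : nsq (U *ᵥ (Uᵀ *ᵥ v)) = nsq (Uᵀ *ᵥ v) := nsq_orth_mulVec U hU _
  have h1 : v ⬝ᵥ (U *ᵥ (Uᵀ *ᵥ v)) ≤ Real.sqrt (nsq v) * Real.sqrt (nsq (Uᵀ *ᵥ v)) := by
    have := dot_le_sqrt v (U *ᵥ (Uᵀ *ᵥ v))
    rwa [hn] at this
  have h3 : Real.sqrt (nsq (Uᵀ *ᵥ v)) ≤ Real.sqrt (nsq v) := by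
    rcases eq_or_lt_of_le (Real.sqrt_nonneg (nsq (Uᵀ *ᵥ v))) with h | h
    · rw [← h]; exact Real.sqrt_nonneg _
    · have h2 : Real.sqrt (nsq (Uᵀ *ᵥ v)) ^ 2 ≤ Real.sqrt (nsq v) * Real.sqrt (nsq (Uᵀ *ᵥ v)) := by
        rw [Real.sq_sqrt (nsq_nonneg _)]
        exact key.trans_le h1
      nlinarith
  have h4 := pow_le_pow_left₀ (Real.sqrt_nonneg _) h3 2
  rwa [Real.sq_sqrt (nsq_nonneg _), Real.sq_sqrt (nsq_nonneg _)] at h4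

lemma nsq_proj_mulVec_le (hU : Uᵀ * U = 1) (v : Fin m → ℝ) : nsq ((U * Uᵀ) *ᵥ v) ≤ nsq v := by
  rw [← Matrix.mulVec_mulVec, nsq_orth_mulVec U hU]
  exact nsq_orthT_mulVec_le U hU v

lemma nsq_projc_mulVec_le (hU : Uᵀ * U = 1) (v : Fin m → ℝ) :
    nsq ((1 - U * Uᵀ) *ᵥ v) ≤ nsq v := by
  have hPv : (U * Uᵀ) *ᵥ v = U *ᵥ (Uᵀ *ᵥ v) := (Matrix.mulVec_mulVec _ _ _).symm
  have key1 : v ⬝ᵥ (U *ᵥ (Uᵀ *ᵥ v)) = nsq (Uᵀ *ᵥ v) := by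
    rw [nsq_eq_dot]
    conv_lhs => rw [Matrix.dotProduct_mulVec, ← Matrix.mulVec_transpose]
  have hnP : nsq (U *ᵥ (Uᵀ *ᵥ v)) = nsq (Uᵀ *ᵥ v) := nsq_orth_mulVec U hU _
  have hexp : nsq ((1 - U * Uᵀ) *ᵥ v) = nsq v - nsq (Uᵀ *ᵥ v) := by
    rw [Matrix.sub_mulVec, Matrix.one_mulVec, hPv, nsq_eq_dot,
      sub_dotProduct, dotProduct_sub, dotProduct_sub]
    rw [dotProduct_comm (U *ᵥ (Uᵀ *ᵥ v)) v]
    rw [key1, ← nsq_eq_dot, ← nsq_eq_dot, hnP]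
    ring
  rw [hexp]
  linarith [nsq_nonneg (Uᵀ *ᵥ v)]
end orth
lemma ip_eq_trace (X Y : Matrix (Fin m) (Fin n) ℝ) : ip X Y = Matrix.trace (Xᵀ * Y) := by
  simp only [ip, Matrix.trace, Matrix.diag, Matrix.mul_apply, Matrix.transpose_apply]
  exact Finset.sum_comm

lemma F2_eq_ip (X : Matrix (Fin m) (Fin n) ℝ) : F2 X = ip X X := by
  simp [F2, ip, sq]

lemma F2_eq_trace (X : Matrix (Fin m) (Fin n) ℝ) : F2 X = Matrix.trace (Xᵀ * X) := by
  rw [F2_eq_ip, ip_eq_trace]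

lemma F2_transpose (X : Matrix (Fin m) (Fin n) ℝ) : F2 Xᵀ = F2 X := by
  simp only [F2, Matrix.transpose_apply]
  exact Finset.sum_comm

lemma F2_mul_orthT (X : Matrix (Fin a) (Fin p) ℝ) (W : Matrix (Fin b) (Fin p) ℝ)
    (hW : Wᵀ * W = 1) : F2 (X * Wᵀ) = F2 X := by
  rw [F2_eq_trace, F2_eq_trace, Matrix.transpose_mul, Matrix.transpose_transpose]
  have h1 : W * Xᵀ * (X * Wᵀ) = W * (Xᵀ * X * Wᵀ) := by simp only [Matrix.mul_assoc]
  rw [h1]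
  rw [Matrix.trace_mul_comm, Matrix.mul_assoc, hW, Matrix.mul_one]

lemma F2_orth_mul (W : Matrix (Fin b) (Fin p) ℝ) (hW : Wᵀ * W = 1)
    (X : Matrix (Fin p) (Fin a) ℝ) : F2 (W * X) = F2 X := by
  rw [F2_eq_trace X, F2_eq_trace, Matrix.transpose_mul]
  have h1 : Xᵀ * Wᵀ * (W * X) = Xᵀ * (Wᵀ * W) * X := by simp only [Matrix.mul_assoc]
  rw [h1]
  rw [hW, Matrix.mul_one]

lemma F2_orthcols (W : Matrix (Fin b) (Fin p) ℝ) (hW : Wᵀ * W = 1) : F2 W = p := by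
  rw [F2_eq_trace, hW, Matrix.trace_one]
  simp

def col' (M : Matrix (Fin m) (Fin n) ℝ) (j : Fin n) : Fin m → ℝ := fun i => M i j

lemma F2_eq_sum_nsq_col (M : Matrix (Fin m) (Fin n) ℝ) : F2 M = ∑ j, nsq (col' M j) := by
  simp only [F2, nsq, col']
  exact Finset.sum_comm

lemma col'_mul (X : Matrix (Fin a) (Fin b) ℝ) (M : Matrix (Fin b) (Fin d) ℝ) (j : Fin d) :
    col' (X * M) j = X *ᵥ col' M j := by
  ext i
  simp [col', Matrix.mul_apply, Matrix.mulVec, dotProduct]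

lemma F2_mul_le (X : Matrix (Fin a) (Fin b) ℝ) (M : Matrix (Fin b) (Fin d) ℝ) (C : ℝ)
    (h : ∀ v : Fin b → ℝ, nsq (X *ᵥ v) ≤ C * nsq v) : F2 (X * M) ≤ C * F2 M := by
  rw [F2_eq_sum_nsq_col, F2_eq_sum_nsq_col, Finset.mul_sum]
  apply Finset.sum_le_sum
  intro j _
  rw [col'_mul]
  exact h _

lemma nsq_nonneg' (v : Fin m → ℝ) : 0 ≤ nsq v :=
  Finset.sum_nonneg fun _ _ => sq_nonneg _

lemma F2_mul_le' (X : Matrix (Fin a) (Fin b) ℝ) (M : Matrix (Fin b) (Fin d) ℝ)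
    (h : ∀ v : Fin b → ℝ, nsq (X *ᵥ v) ≤ nsq v) : F2 (X * M) ≤ F2 M := by
  have := F2_mul_le X M 1 (by intro v; rw [one_mul]; exact h v)
  simpa using this

lemma F2_flat (X : Matrix (Fin m) (Fin n) ℝ) :
    F2 X = ∑ q : Fin m × Fin n, (X q.1 q.2) ^ 2 := by
  rw [F2, Fintype.sum_prod_type]

lemma ip_flat (X Y : Matrix (Fin m) (Fin n) ℝ) :
    ip X Y = ∑ q : Fin m × Fin n, X q.1 q.2 * Y q.1 q.2 := by
  rw [ip, Fintype.sum_prod_type]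

lemma ip_le_sqrt (X Y : Matrix (Fin m) (Fin n) ℝ) :
    ip X Y ≤ Real.sqrt (F2 X) * Real.sqrt (F2 Y) := by
  rw [ip_flat, F2_flat, F2_flat]
  exact Real.sum_mul_le_sqrt_mul_sqrt Finset.univ _ _

lemma F2_add3 (D E F : Matrix (Fin m) (Fin n) ℝ) :
    F2 (D + E + F) = F2 D + F2 E + F2 F + 2 * ip D E + 2 * ip D F + 2 * ip E F := by
  simp only [F2, ip, Matrix.add_apply, Finset.mul_sum]
  rw [← Finset.sum_add_distrib, ← Finset.sum_add_distrib, ← Finset.sum_add_distrib,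
    ← Finset.sum_add_distrib, ← Finset.sum_add_distrib]
  apply Finset.sum_congr rfl
  intro i _
  rw [← Finset.sum_add_distrib, ← Finset.sum_add_distrib, ← Finset.sum_add_distrib,
    ← Finset.sum_add_distrib, ← Finset.sum_add_distrib]
  apply Finset.sum_congr rfl
  intro j _
  ring


end SF16

open SF16 in
set_option maxHeartbeats 1000000 in
theorem stmt_16 {m n k c r : ℕ} (hk : 0 < k) (ε : ℝ) (hε : 0 < ε)
    (A Ak : Matrix (Fin m) (Fin n) ℝ)
    (Uk : Matrix (Fin m) (Fin k) ℝ) (Vk : Matrix (Fin n) (Fin k) ℝ)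
    (hUk : Ukᵀ * Uk = 1) (hVk : Vkᵀ * Vk = 1)
    (hAkU : Ak = Uk * Ukᵀ * A) (hAkV : Ak = A * (Vk * Vkᵀ))
    (hbest : ∀ B : Matrix (Fin m) (Fin n) ℝ, B.rank ≤ k → frob (A - Ak) ≤ frob (A - B))
    (UC : Matrix (Fin m) (Fin c) ℝ) (VR : Matrix (Fin n) (Fin r) ℝ)
    (hUC : UCᵀ * UC = 1) (hVR : VRᵀ * VR = 1)
    (hPSF : spec ((1 - UC * UCᵀ) * A) ^ 2 ≤ (ε / (k : ℝ)) * frob (A - Ak) ^ 2)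
    (hQSF : spec (A * (1 - VR * VRᵀ)) ^ 2 ≤ (ε / (k : ℝ)) * frob (A - Ak) ^ 2) :
    ∃ X : Matrix (Fin c) (Fin r) ℝ,
      frob (A - UC * X * VRᵀ) ≤ Real.sqrt (1 + 4 * ε) * frob (A - Ak) := by
  have hkR : (0 : ℝ) < (k : ℝ) := by exact_mod_cast hk
  set P : Matrix (Fin m) (Fin m) ℝ := UC * UCᵀ with hP
  set Q : Matrix (Fin n) (Fin n) ℝ := VR * VRᵀ with hQ
  set s2 : ℝ := F2 (A - Ak) with hs2
  have hs2nn : 0 ≤ s2 := F2_nonneg _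
  have hfr : frob (A - Ak) ^ 2 = s2 := by
    rw [frob_eq, Real.sq_sqrt (F2_nonneg _)]
  set τ2 : ℝ := spec ((1 - P) * A) ^ 2 with hτ2
  set σ2 : ℝ := spec (A * (1 - Q)) ^ 2 with hσ2
  have hτ2nn : 0 ≤ τ2 := sq_nonneg _
  have hσ2nn : 0 ≤ σ2 := sq_nonneg _
  have hτ : τ2 ≤ (ε / (k : ℝ)) * s2 := by rw [hτ2]; rw [hfr] at hPSF; exact hPSF
  have hσ : σ2 ≤ (ε / (k : ℝ)) * s2 := by rw [hσ2]; rw [hfr] at hQSF; exact hQSF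
  have hτk : τ2 * (k : ℝ) ≤ ε * s2 := by
    have := mul_le_mul_of_nonneg_right hτ (le_of_lt hkR)
    calc τ2 * (k : ℝ) ≤ (ε / (k : ℝ)) * s2 * (k : ℝ) := this
    _ = ε * s2 := by field_simp
  have hσk : σ2 * (k : ℝ) ≤ ε * s2 := by
    have := mul_le_mul_of_nonneg_right hσ (le_of_lt hkR)
    calc σ2 * (k : ℝ) ≤ (ε / (k : ℝ)) * s2 * (k : ℝ) := this
    _ = ε * s2 := by field_simp
  -- idempotents
  have hQQ : Q * Q = Q := by
    rw [hQ, Matrix.mul_assoc, ← Matrix.mul_assoc VRᵀ, hVR, Matrix.one_mul]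
  have hPP : P * P = P := by
    rw [hP, Matrix.mul_assoc, ← Matrix.mul_assoc UCᵀ, hUC, Matrix.one_mul]
  have hVqVq : (Vk * Vkᵀ) * (Vk * Vkᵀ) = Vk * Vkᵀ := by
    rw [Matrix.mul_assoc, ← Matrix.mul_assoc Vkᵀ, hVk, Matrix.one_mul]
  have hQT : Qᵀ = Q := by rw [hQ, Matrix.transpose_mul, Matrix.transpose_transpose]
  have hPT : Pᵀ = P := by rw [hP, Matrix.transpose_mul, Matrix.transpose_transpose]
  -- the decomposition
  set D : Matrix (Fin m) (Fin n) ℝ := A - Ak with hD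
  set E1 : Matrix (Fin m) (Fin n) ℝ := (1 - P) * Ak with hE1
  set E2 : Matrix (Fin m) (Fin n) ℝ := P * Ak * (1 - Q) with hE2
  refine ⟨UCᵀ * Ak * VR, ?_⟩
  have hdec : A - UC * (UCᵀ * Ak * VR) * VRᵀ = D + E1 + E2 := by
    have : UC * (UCᵀ * Ak * VR) * VRᵀ = P * Ak * Q := by
      rw [hP, hQ]; simp only [Matrix.mul_assoc]
    rw [this, hD, hE1, hE2]
    simp only [Matrix.sub_mul, Matrix.mul_sub, Matrix.one_mul, Matrix.mul_one]
    abel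
  -- bound on F2 E1
  have hFE1 : F2 E1 ≤ ε * s2 := by
    have e1eq : E1 = (((1 - P) * A) * Vk) * Vkᵀ := by
      rw [hE1, hAkV]; simp only [Matrix.mul_assoc]
    rw [e1eq, F2_mul_orthT _ Vk hVk]
    have h1 := F2_mul_le ((1 - P) * A) Vk τ2 (fun v => nsq_mulVec_le _ v)
    have h2 : F2 Vk = (k : ℝ) := F2_orthcols Vk hVk
    rw [h2] at h1
    exact h1.trans hτk
  -- N and its bound
  set N : Matrix (Fin k) (Fin n) ℝ := (Ukᵀ * A) * (1 - Q) with hN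
  have hNT : Nᵀ = (A * (1 - Q))ᵀ * Uk := by
    rw [hN]; simp only [Matrix.transpose_mul, Matrix.transpose_transpose, Matrix.mul_assoc]
  have hFN : F2 N ≤ σ2 * (k : ℝ) := by
    rw [← F2_transpose N, hNT]
    have h1 := F2_mul_le (A * (1 - Q))ᵀ Uk σ2 (fun v => nsq_transpose_mulVec_le _ v)
    have h2 : F2 Uk = (k : ℝ) := F2_orthcols Uk hUk
    rw [h2] at h1
    exact h1
  -- bound on F2 E2
  have hAkQ : Ak * (1 - Q) = Uk * N := by
    rw [hN, hAkU]; simp only [Matrix.mul_assoc]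
  have hFE2 : F2 E2 ≤ ε * s2 := by
    have e2eq : E2 = P * (Ak * (1 - Q)) := by rw [hE2, Matrix.mul_assoc]
    rw [e2eq, hAkQ]
    have h1 : F2 (P * (Uk * N)) ≤ F2 (Uk * N) :=
      F2_mul_le' P _ (fun v => nsq_proj_mulVec_le UC hUC v)
    rw [F2_orth_mul Uk hUk N] at h1
    exact h1.trans (hFN.trans hσk)
  -- ip D E1 = 0
  have hip1 : ip D E1 = 0 := by
    rw [ip_eq_trace]
    have hDT : Dᵀ = (1 - Vk * Vkᵀ) * Aᵀ := by
      rw [hD, hAkV, Matrix.transpose_sub, Matrix.transpose_mul, Matrix.transpose_mul,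
        Matrix.transpose_transpose, Matrix.sub_mul, Matrix.one_mul]
    have hE1' : E1 = ((1 - P) * A) * (Vk * Vkᵀ) := by
      rw [hE1, hAkV]; simp only [Matrix.mul_assoc]
    have key : Dᵀ * E1 = (1 - Vk * Vkᵀ) * ((Aᵀ * ((1 - P) * A)) * (Vk * Vkᵀ)) := by
      rw [hDT, hE1']; simp only [Matrix.mul_assoc]
    rw [key, Matrix.trace_mul_comm, Matrix.mul_assoc]
    have : (Vk * Vkᵀ) * (1 - Vk * Vkᵀ) = 0 := by
      rw [Matrix.mul_sub, Matrix.mul_one, hVqVq, sub_self]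
    rw [this, Matrix.mul_zero, Matrix.trace_zero]
  -- ip E1 E2 = 0
  have hip3 : ip E1 E2 = 0 := by
    rw [ip_eq_trace]
    have hE1T : E1ᵀ = Akᵀ * (1 - P) := by
      rw [hE1, Matrix.transpose_mul, Matrix.transpose_sub, Matrix.transpose_one, hPT]
    have key : E1ᵀ * E2 = Akᵀ * (((1 - P) * P) * (Ak * (1 - Q))) := by
      rw [hE1T, hE2]; simp only [Matrix.mul_assoc]
    have hz : (1 - P) * P = 0 := by
      rw [Matrix.sub_mul, Matrix.one_mul, hPP, sub_self]
    rw [key, hz, Matrix.zero_mul, Matrix.mul_zero, Matrix.trace_zero]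
  -- ip D E2 ≤ ε * s2
  set G : Matrix (Fin k) (Fin n) ℝ := ((Ukᵀ * P) * D) * (1 - Q) with hG
  have hip2 : ip D E2 ≤ ε * s2 := by
    have hE2Q : E2 * (1 - Q) = E2 := by
      rw [hE2, Matrix.mul_assoc ((P : Matrix (Fin m) (Fin m) ℝ) * Ak)]
      have : (1 - Q) * (1 - Q) = 1 - Q := by
        rw [Matrix.mul_sub, Matrix.mul_one, Matrix.sub_mul, Matrix.one_mul, hQQ]
        abel
      rw [this]
    have hGT : Gᵀ = (1 - Q) * (Dᵀ * (P * Uk)) := by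
      rw [hG]
      simp only [Matrix.transpose_mul, Matrix.transpose_sub, Matrix.transpose_one,
        Matrix.transpose_transpose, hQT, hPT, Matrix.mul_assoc]
    have heq : ip D E2 = ip G N := by
      rw [ip_eq_trace, ip_eq_trace]
      have hGN : Gᵀ * N = (1 - Q) * (Dᵀ * E2) := by
        rw [hGT, hN, hE2, hAkU]
        simp only [Matrix.mul_assoc]
      rw [hGN]
      conv_rhs => rw [Matrix.trace_mul_comm]
      rw [Matrix.mul_assoc, hE2Q]
    -- bound on F2 G
    have hFG : F2 G ≤ σ2 * (k : ℝ) := by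
      have hGT2 : Gᵀ = (A * (1 - Q))ᵀ * ((1 - Uk * Ukᵀ) * (P * Uk)) := by
        rw [hGT, hD, hAkU]
        have hDT2 : Dᵀ = Aᵀ * (1 - Uk * Ukᵀ) := by
          rw [hD, hAkU, Matrix.transpose_sub, Matrix.mul_sub, Matrix.mul_one]
          congr 1
          simp only [Matrix.transpose_mul, Matrix.transpose_transpose, Matrix.mul_assoc]
        rw [← hAkU, hDT2]
        simp only [Matrix.transpose_mul, Matrix.transpose_sub, Matrix.transpose_one, hQT,
          Matrix.mul_assoc]
      rw [← F2_transpose G, hGT2]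
      have h1 := F2_mul_le (A * (1 - Q))ᵀ ((1 - Uk * Ukᵀ) * (P * Uk)) σ2
        (fun v => nsq_transpose_mulVec_le _ v)
      have h2 : F2 ((1 - Uk * Ukᵀ) * (P * Uk)) ≤ F2 (P * Uk) :=
        F2_mul_le' _ _ (fun v => nsq_projc_mulVec_le Uk hUk v)
      have h3 : F2 (P * Uk) ≤ F2 Uk :=
        F2_mul_le' _ _ (fun v => nsq_proj_mulVec_le UC hUC v)
      have h4 : F2 Uk = (k : ℝ) := F2_orthcols Uk hUk
      calc F2 ((A * (1 - Q))ᵀ * ((1 - Uk * Ukᵀ) * (P * Uk)))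
          ≤ σ2 * F2 ((1 - Uk * Ukᵀ) * (P * Uk)) := h1
        _ ≤ σ2 * (k : ℝ) := by
            apply mul_le_mul_of_nonneg_left _ hσ2nn
            rw [← h4]
            exact h2.trans h3
    have hbound : ip G N ≤ σ2 * (k : ℝ) := by
      have h1 := ip_le_sqrt G N
      have h2 : Real.sqrt (F2 G) ≤ Real.sqrt (σ2 * (k : ℝ)) := Real.sqrt_le_sqrt hFG
      have h3 : Real.sqrt (F2 N) ≤ Real.sqrt (σ2 * (k : ℝ)) := Real.sqrt_le_sqrt hFN
      calc ip G N ≤ Real.sqrt (F2 G) * Real.sqrt (F2 N) := h1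
        _ ≤ Real.sqrt (σ2 * (k : ℝ)) * Real.sqrt (σ2 * (k : ℝ)) := by
            exact mul_le_mul h2 h3 (Real.sqrt_nonneg _) (Real.sqrt_nonneg _)
        _ = σ2 * (k : ℝ) := Real.mul_self_sqrt (by positivity)
    rw [heq]
    exact hbound.trans hσk
  -- assemble
  have hF2total : F2 (A - UC * (UCᵀ * Ak * VR) * VRᵀ) ≤ (1 + 4 * ε) * s2 := by
    rw [hdec, F2_add3]
    have hFD : F2 D = s2 := hs2.symm
    rw [hFD, hip1, hip3]
    linarith [hFE1, hFE2, hip2]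
  have hfinal : frob (A - UC * (UCᵀ * Ak * VR) * VRᵀ) ≤
      Real.sqrt ((1 + 4 * ε) * s2) := by
    rw [frob_eq]
    exact Real.sqrt_le_sqrt hF2total
  calc frob (A - UC * (UCᵀ * Ak * VR) * VRᵀ) ≤ Real.sqrt ((1 + 4 * ε) * s2) := hfinal
    _ = Real.sqrt (1 + 4 * ε) * Real.sqrt s2 := Real.sqrt_mul (by positivity) _
    _ = Real.sqrt (1 + 4 * ε) * frob (A - Ak) := by rw [frob_eq]
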